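/- Let 1 < p < ∞ and let (a₀, b₀) ∈ ℝ² \ {(0,0)}. Then there exists a function w ∈ C^∞(ℝ) satisfying w(0) = a₀, w'(0) = b₀, and the differential equation w''(s) + V(w(s), w'(s)) w(s) = 0 for all s ∈ ℝ, such that w is periodic with some period λ_p > 0, ∫₀^{λ_p} w(s) ds = 0, and there exist constants c, C > 0 (depending on a₀, b₀ and p) with c < (w(s))² + (w'(s))² < C for all s ∈ ℝ. -/

import Mathlib

open MeasureTheory Filter Set
open scoped Topology ContDiff

noncomputable section

/-- The nonlinearity `V(a,b) = ((2p−3)b² + (p−1)a²) / ((p−1)b² + a²)` appearing in the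
Wolff ODE. -/
def wolffV (p a b : ℝ) : ℝ :=
  ((2 * p - 3) * b ^ 2 + (p - 1) * a ^ 2) / ((p - 1) * b ^ 2 + a ^ 2)

/-- Phase parametrization: `s` as a function of the phase angle `θ` (up to sign/shift). -/
def wPsi (p θ : ℝ) : ℝ := (2 * p * θ - (p - 2) * Real.sin (2 * θ)) / (4 * (p - 1))

/-- The (positive) derivative of `wPsi`. -/
def wD (p θ : ℝ) : ℝ := ((p - 1) * Real.sin θ ^ 2 + Real.cos θ ^ 2) / (p - 1)

lemma wD_pos {p : ℝ} (hp : 1 < p) (θ : ℝ) : 0 < wD p θ := by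
  have h := Real.sin_sq_add_cos_sq θ
  have h1 : (0:ℝ) ≤ Real.sin θ ^ 2 := sq_nonneg _
  have h2 : (0:ℝ) ≤ Real.cos θ ^ 2 := sq_nonneg _
  apply div_pos _ (by linarith)
  rcases le_total p 2 with h3 | h3
  · nlinarith
  · nlinarith

lemma hasDerivAt_wPsi {p : ℝ} (hp : 1 < p) (θ : ℝ) :
    HasDerivAt (wPsi p) (wD p θ) θ := by
  have h1 : HasDerivAt (fun θ : ℝ => 2 * θ) 2 θ := by
    simpa using (hasDerivAt_id θ).const_mul 2
  have h2 : HasDerivAt (fun θ : ℝ => Real.sin (2 * θ)) (Real.cos (2 * θ) * 2) θ :=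
    (Real.hasDerivAt_sin (2 * θ)).comp θ h1
  have h3 : HasDerivAt (fun θ : ℝ => 2 * p * θ - (p - 2) * Real.sin (2 * θ))
      (2 * p - (p - 2) * (Real.cos (2 * θ) * 2)) θ :=
    by have := ((hasDerivAt_id' θ).const_mul (2 * p)).sub (h2.const_mul (p - 2)); rw [mul_one] at this; exact this
  have h4 := h3.div_const (4 * (p - 1))
  refine h4.congr_deriv ?_
  have hc : Real.cos (2 * θ) = 2 * Real.cos θ ^ 2 - 1 := Real.cos_two_mul θ
  have hs : Real.sin θ ^ 2 = 1 - Real.cos θ ^ 2 := Real.sin_sq θ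
  have hq : p - 1 ≠ 0 := by linarith
  rw [wD, hc, hs]
  field_simp
  ring

lemma contDiff_wPsi (p : ℝ) : ContDiff ℝ ω (wPsi p) := by
  unfold wPsi
  exact ((contDiff_const.mul contDiff_id).sub
    (contDiff_const.mul (Real.contDiff_sin.comp (contDiff_const.mul contDiff_id)))).div_const _

lemma strictMono_wPsi {p : ℝ} (hp : 1 < p) : StrictMono (wPsi p) := by
  apply strictMono_of_deriv_pos
  intro x
  rw [(hasDerivAt_wPsi hp x).deriv]
  exact wD_pos hp x

lemma surjective_wPsi {p : ℝ} (hp : 1 < p) : Function.Surjective (wPsi p) := by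
  have hq : (0:ℝ) < 4 * (p - 1) := by linarith
  have hcont : Continuous (wPsi p) := (contDiff_wPsi p).continuous
  have hbound : ∀ θ : ℝ, (2 * p * θ - |p - 2|) / (4 * (p - 1)) ≤ wPsi p θ ∧
      wPsi p θ ≤ (2 * p * θ + |p - 2|) / (4 * (p - 1)) := by
    intro θ
    have h1 := Real.neg_one_le_sin (2 * θ)
    have h2 := Real.sin_le_one (2 * θ)
    have h3 := le_abs_self (p - 2)
    have h4 := neg_abs_le (p - 2)
    constructor
    · apply div_le_div_of_nonneg_right ?_ hq.le
      nlinarith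
    · apply div_le_div_of_nonneg_right ?_ hq.le
      nlinarith
  have hlin : ∀ c : ℝ, Tendsto (fun θ : ℝ => (2 * p * θ + c) / (4 * (p - 1))) atTop atTop := by
    intro c
    apply Filter.Tendsto.atTop_div_const hq
    apply tendsto_atTop_add_const_right
    exact Tendsto.const_mul_atTop (by linarith) tendsto_id
  have hlinb : ∀ c : ℝ, Tendsto (fun θ : ℝ => (2 * p * θ + c) / (4 * (p - 1))) atBot atBot := by
    intro c
    apply Filter.Tendsto.atBot_div_const hq
    apply tendsto_atBot_add_const_right
    exact Tendsto.const_mul_atBot (by linarith) tendsto_id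
  apply hcont.surjective
  · exact tendsto_atTop_mono
      (fun θ => by simpa [sub_eq_add_neg] using (hbound θ).1) (hlin (-|p - 2|))
  · exact tendsto_atBot_mono (fun θ => (hbound θ).2) (hlinb |p - 2|)

lemma exists_wTheta {p : ℝ} (hp : 1 < p) :
    ∃ T : ℝ → ℝ, (∀ θ, T (wPsi p θ) = θ) ∧ (∀ s, wPsi p (T s) = s) ∧
      ContDiff ℝ ω T ∧ ∀ s, HasDerivAt T (wD p (T s))⁻¹ s := by
  let e : ℝ ≃o ℝ := StrictMono.orderIsoOfSurjective _ (strictMono_wPsi hp) (surjective_wPsi hp)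
  let h : ℝ ≃ₜ ℝ := e.toHomeomorph
  have hcoe : (h : ℝ → ℝ) = wPsi p := rfl
  refine ⟨h.symm, fun θ => h.symm_apply_apply θ, fun s => h.apply_symm_apply s, ?_, ?_⟩
  · apply h.contDiff_symm_deriv (f' := wD p) (fun x => (wD_pos hp x).ne') ?_ ?_
    · intro x; rw [hcoe]; exact hasDerivAt_wPsi hp x
    · rw [hcoe]; exact contDiff_wPsi p
  · intro s
    apply HasDerivAt.of_local_left_inverse (h.symm.continuous.continuousAt)
      (hasDerivAt_wPsi hp _) (wD_pos hp _).ne'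
    exact Filter.Eventually.of_forall (fun s => h.apply_symm_apply s)

/-- The radius (first integral) function. -/
def wR (p K θ : ℝ) : ℝ := K * Real.exp (-(p - 2) * Real.cos θ ^ 2 / (2 * (p - 1)))

lemma wR_pos {p K : ℝ} (hK : 0 < K) (θ : ℝ) : 0 < wR p K θ :=
  mul_pos hK (Real.exp_pos _)

lemma contDiff_wR (p K : ℝ) : ContDiff ℝ ω (wR p K) :=
  contDiff_const.mul (Real.contDiff_exp.comp
    ((contDiff_const.mul (Real.contDiff_cos.pow 2)).div_const _))

lemma hasDerivAt_wR {p K : ℝ} (hp : 1 < p) (θ : ℝ) :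
    HasDerivAt (wR p K) (wR p K θ * ((p - 2) * Real.sin θ * Real.cos θ / (p - 1))) θ := by
  have hq : p - 1 ≠ 0 := by linarith
  have h1 : HasDerivAt (fun θ : ℝ => Real.cos θ ^ 2)
      (2 * Real.cos θ ^ 1 * (-Real.sin θ)) θ := (Real.hasDerivAt_cos θ).pow 2
  have h2 : HasDerivAt (fun θ : ℝ => -(p - 2) * Real.cos θ ^ 2 / (2 * (p - 1)))
      (-(p - 2) * (2 * Real.cos θ ^ 1 * (-Real.sin θ)) / (2 * (p - 1))) θ :=
    (h1.const_mul _).div_const _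
  have h3 := (Real.hasDerivAt_exp _).comp θ h2
  have h4 := h3.const_mul K
  refine h4.congr_deriv ?_
  rw [wR]
  field_simp

lemma wR_add_pi {p K : ℝ} (θ : ℝ) : wR p K (θ + Real.pi) = wR p K θ := by
  rw [wR, wR, Real.cos_add_pi, neg_sq]

lemma wR_sub_two_pi {p K : ℝ} (θ : ℝ) : wR p K (θ - 2 * Real.pi) = wR p K θ := by
  rw [wR, wR, Real.cos_sub_two_pi]

lemma wD_add_pi {p : ℝ} (θ : ℝ) : wD p (θ + Real.pi) = wD p θ := by
  rw [wD, wD, Real.cos_add_pi, Real.sin_add_pi, neg_sq, neg_sq]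

lemma wPsi_sub_two_pi {p : ℝ} (hp : 1 < p) (θ : ℝ) :
    wPsi p (θ - 2 * Real.pi) = wPsi p θ - p * Real.pi / (p - 1) := by
  have hs : Real.sin (2 * (θ - 2 * Real.pi)) = Real.sin (2 * θ) := by
    rw [show 2 * (θ - 2 * Real.pi) = 2 * θ - 2 * Real.pi - 2 * Real.pi by ring,
      Real.sin_sub_two_pi, Real.sin_sub_two_pi]
  have hq : p - 1 ≠ 0 := by linarith
  rw [wPsi, wPsi, hs]
  field_simp
  ring

lemma wchain1 {p R S Cs : ℝ} (hp : 1 < p) (hsc : S ^ 2 + Cs ^ 2 = 1) :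
    (R * ((p - 2) * S * Cs / (p - 1)) * Cs + R * (-S)) *
      (-(((p - 1) * S ^ 2 + Cs ^ 2) / (p - 1))⁻¹) = R * S := by
  have hq : p - 1 ≠ 0 := by linarith
  have hd : (p - 1) * S ^ 2 + Cs ^ 2 ≠ 0 := by nlinarith [sq_nonneg S, sq_nonneg Cs, mul_nonneg (le_of_lt (sub_pos.2 hp)) (sq_nonneg S)]
  field_simp
  have hd' : S ^ 2 * (p - 1) + Cs ^ 2 ≠ 0 := by rw [mul_comm]; exact hd
  rw [neg_eq_iff_eq_neg, div_eq_iff hd']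
  linear_combination (R * S * (p - 1)) * hsc

lemma wchain2 {p R S Cs : ℝ} (hp : 1 < p) (hsc : S ^ 2 + Cs ^ 2 = 1) :
    (R * ((p - 2) * S * Cs / (p - 1)) * S + R * Cs) *
      (-(((p - 1) * S ^ 2 + Cs ^ 2) / (p - 1))⁻¹) =
      -(R * Cs) * (((2 * p - 3) * S ^ 2 + (p - 1) * Cs ^ 2) /
        ((p - 1) * S ^ 2 + Cs ^ 2)) := by
  have hq : p - 1 ≠ 0 := by linarith
  have hd : (p - 1) * S ^ 2 + Cs ^ 2 ≠ 0 := by nlinarith [sq_nonneg S, sq_nonneg Cs, mul_nonneg (le_of_lt (sub_pos.2 hp)) (sq_nonneg S)]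
  field_simp
  rw [neg_inj]
  congr 1
  linear_combination (-(R * Cs * (p - 1))) * hsc

lemma wolff_ode_identity {p R S Cs : ℝ} (hp : 1 < p) (hR : 0 < R)
    (hsc : S ^ 2 + Cs ^ 2 = 1) :
    -(R * Cs) * (((2 * p - 3) * S ^ 2 + (p - 1) * Cs ^ 2) /
        ((p - 1) * S ^ 2 + Cs ^ 2)) + wolffV p (R * Cs) (R * S) * (R * Cs) = 0 := by
  have hd : (0:ℝ) < (p - 1) * S ^ 2 + Cs ^ 2 := by nlinarith [sq_nonneg S, sq_nonneg Cs, mul_nonneg (le_of_lt (sub_pos.2 hp)) (sq_nonneg S)]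
  have hd2 : (0:ℝ) < (p - 1) * (R * S) ^ 2 + (R * Cs) ^ 2 := by nlinarith [mul_pos hR hR]
  rw [wolffV]
  field_simp
  ring


/-- Existence of Wolff solutions: for `1 < p < ∞` and initial data
`(a₀, b₀) ≠ (0,0)` there is a smooth solution `w` of `w'' + V(w,w')w = 0` with
`(w(0), w'(0)) = (a₀, b₀)`, periodic with some period `λ_p > 0`, with zero mean over one
period, and with `c < w² + (w')² < C` everywhere for some constants `0 < c`, `C`. -/
theorem wolff_solution_exists (p : ℝ) (hp : 1 < p) (a₀ b₀ : ℝ)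
    (hab : (a₀, b₀) ≠ (0, 0)) :
    ∃ w : ℝ → ℝ, ContDiff ℝ (⊤ : ℕ∞) w ∧ w 0 = a₀ ∧ deriv w 0 = b₀ ∧
      (∀ s : ℝ, deriv (deriv w) s + wolffV p (w s) (deriv w s) * w s = 0) ∧
      ∃ lp : ℝ, 0 < lp ∧ Function.Periodic w lp ∧ (∫ s in (0:ℝ)..lp, w s) = 0 ∧
        ∃ c C : ℝ, 0 < c ∧
          ∀ s : ℝ, c < (w s) ^ 2 + (deriv w s) ^ 2 ∧ (w s) ^ 2 + (deriv w s) ^ 2 < C := by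
  obtain ⟨T, hTl, hTr, hTsmooth, hT'⟩ := exists_wTheta hp
  have hq : (0:ℝ) < p - 1 := by linarith
  set z : ℂ := ⟨a₀, b₀⟩ with hzdef
  have hz0 : z ≠ 0 := by
    simp only [ne_eq, Complex.ext_iff, Complex.zero_re, Complex.zero_im, hzdef]
    rintro ⟨h1, h2⟩
    exact hab (by simp [Prod.ext_iff, h1, h2])
  set r₀ : ℝ := ‖z‖ with hr₀def
  have hr₀ : 0 < r₀ := norm_pos_iff.2 hz0
  set θ₀ : ℝ := z.arg with hθ₀def
  have hcos : Real.cos θ₀ = a₀ / r₀ := Complex.cos_arg hz0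
  have hsin : Real.sin θ₀ = b₀ / r₀ := Complex.sin_arg z
  set K : ℝ := r₀ * Real.exp ((p - 2) * Real.cos θ₀ ^ 2 / (2 * (p - 1))) with hKdef
  have hK : 0 < K := mul_pos hr₀ (Real.exp_pos _)
  have hRθ₀ : wR p K θ₀ = r₀ := by
    rw [wR, hKdef, mul_assoc, ← Real.exp_add,
      show (p - 2) * Real.cos θ₀ ^ 2 / (2 * (p - 1)) +
        -(p - 2) * Real.cos θ₀ ^ 2 / (2 * (p - 1)) = 0 by ring, Real.exp_zero, mul_one]
  set χ : ℝ → ℝ := fun s => T (wPsi p θ₀ - s) with hχdef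
  have hχ0 : χ 0 = θ₀ := by simp [hχdef, hTl θ₀]
  have hχd : ∀ s, HasDerivAt χ (-(wD p (χ s))⁻¹) s := by
    intro s
    have h1 : HasDerivAt (fun s : ℝ => wPsi p θ₀ - s) (-1) s := by
      simpa using (hasDerivAt_id s).const_sub (wPsi p θ₀)
    have h2 := (hT' (wPsi p θ₀ - s)).comp s h1
    simpa [mul_comm, hχdef, Function.comp_def] using h2
  have hχs : ContDiff ℝ ω χ := hTsmooth.comp (contDiff_const.sub contDiff_id)
  have hχcont : Continuous χ := hχs.continuous
  set w : ℝ → ℝ := fun s => wR p K (χ s) * Real.cos (χ s) with hwdef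
  set wb : ℝ → ℝ := fun s => wR p K (χ s) * Real.sin (χ s) with hwbdef
  have hpy : ∀ s : ℝ, Real.sin (χ s) ^ 2 + Real.cos (χ s) ^ 2 = 1 :=
    fun s => Real.sin_sq_add_cos_sq _
  have hw' : ∀ s, HasDerivAt w (wb s) s := by
    intro s
    have hg : HasDerivAt (fun θ => wR p K θ * Real.cos θ)
        (wR p K (χ s) * ((p - 2) * Real.sin (χ s) * Real.cos (χ s) / (p - 1)) *
          Real.cos (χ s) + wR p K (χ s) * (-Real.sin (χ s))) (χ s) :=
      (hasDerivAt_wR hp _).mul (Real.hasDerivAt_cos _)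
    have h2 := hg.comp s (hχd s)
    have h3 : (wR p K (χ s) * ((p - 2) * Real.sin (χ s) * Real.cos (χ s) / (p - 1)) *
          Real.cos (χ s) + wR p K (χ s) * (-Real.sin (χ s))) * (-(wD p (χ s))⁻¹) = wb s := by
      rw [wD]; exact wchain1 hp (hpy s)
    rw [h3] at h2
    exact h2
  have hwb' : ∀ s, HasDerivAt wb (-(wR p K (χ s) * Real.cos (χ s)) *
      (((2 * p - 3) * Real.sin (χ s) ^ 2 + (p - 1) * Real.cos (χ s) ^ 2) /
        ((p - 1) * Real.sin (χ s) ^ 2 + Real.cos (χ s) ^ 2))) s := by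
    intro s
    have hg : HasDerivAt (fun θ => wR p K θ * Real.sin θ)
        (wR p K (χ s) * ((p - 2) * Real.sin (χ s) * Real.cos (χ s) / (p - 1)) *
          Real.sin (χ s) + wR p K (χ s) * Real.cos (χ s)) (χ s) :=
      (hasDerivAt_wR hp _).mul (Real.hasDerivAt_sin _)
    have h2 := hg.comp s (hχd s)
    have h3 : (wR p K (χ s) * ((p - 2) * Real.sin (χ s) * Real.cos (χ s) / (p - 1)) *
          Real.sin (χ s) + wR p K (χ s) * Real.cos (χ s)) * (-(wD p (χ s))⁻¹) =
        -(wR p K (χ s) * Real.cos (χ s)) *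
          (((2 * p - 3) * Real.sin (χ s) ^ 2 + (p - 1) * Real.cos (χ s) ^ 2) /
            ((p - 1) * Real.sin (χ s) ^ 2 + Real.cos (χ s) ^ 2)) := by
      rw [wD]; exact wchain2 hp (hpy s)
    rw [h3] at h2
    exact h2
  have hderivw : deriv w = wb := funext fun s => (hw' s).deriv
  refine ⟨w, ?_, ?_, ?_, ?_, ?_⟩
  · exact (((contDiff_wR p K).comp hχs).mul (Real.contDiff_cos.comp hχs)).of_le le_top
  · show wR p K (χ 0) * Real.cos (χ 0) = a₀
    rw [hχ0, hRθ₀, hcos]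
    field_simp
  · rw [hderivw]
    show wR p K (χ 0) * Real.sin (χ 0) = b₀
    rw [hχ0, hRθ₀, hsin]
    field_simp
  · intro s
    rw [hderivw, (hwb' s).deriv]
    exact wolff_ode_identity hp (wR_pos hK (χ s)) (hpy s)
  set lp : ℝ := p * Real.pi / (p - 1) with hlpdef
  have hlp : 0 < lp := div_pos (mul_pos (by linarith) Real.pi_pos) hq
  have hχper : ∀ s, χ (s + lp) = χ s - 2 * Real.pi := by
    intro s
    apply (strictMono_wPsi hp).injective
    rw [wPsi_sub_two_pi hp]
    simp only [hχdef]
    rw [hTr, hTr]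
    ring
  have hper : Function.Periodic w lp := by
    intro s
    simp only [hwdef]
    rw [hχper s, wR_sub_two_pi, Real.cos_sub_two_pi]
  refine ⟨lp, hlp, hper, ?_, ?_⟩
  · -- zero mean
    set g : ℝ → ℝ := fun θ => -(wR p K θ * Real.cos θ) * wD p θ with hgdef
    have hwDcont : Continuous (wD p) :=
      ((continuous_const.mul (Real.continuous_sin.pow 2)).add
        (Real.continuous_cos.pow 2)).div_const _
    have hgcont : Continuous g :=
      (((contDiff_wR p K).continuous.mul Real.continuous_cos).neg).mul hwDcont
    have hf'cont : ContinuousOn (fun s => -(wD p (χ s))⁻¹) (uIcc 0 lp) :=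
      (((hwDcont.comp hχcont).inv₀ fun s => (wD_pos hp _).ne').neg).continuousOn
    have hsub := intervalIntegral.integral_comp_smul_deriv
      (f := χ) (f' := fun s => -(wD p (χ s))⁻¹) (g := g) (a := 0) (b := lp)
      (fun x _ => hχd x) hf'cont hgcont
    have heq : EqOn (fun x => (-(wD p (χ x))⁻¹) • (g ∘ χ) x) w (uIcc 0 lp) := by
      intro x _
      have hD := (wD_pos hp (χ x)).ne'
      simp only [smul_eq_mul, Function.comp, hgdef, hwdef]
      field_simp
    rw [← intervalIntegral.integral_congr heq, hsub, hχ0,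
      show χ lp = θ₀ - 2 * Real.pi by rw [← zero_add lp, hχper 0, hχ0]]
    have hganti : ∀ θ, g (θ + Real.pi) = -g θ := by
      intro θ
      simp only [hgdef]
      rw [wR_add_pi, Real.cos_add_pi, wD_add_pi]
      ring
    have hint : ∀ a b : ℝ, IntervalIntegrable g MeasureTheory.volume a b :=
      fun a b => hgcont.intervalIntegrable a b
    have h2 : ∫ θ in (θ₀ - Real.pi)..θ₀, g θ =
        -∫ θ in (θ₀ - 2 * Real.pi)..(θ₀ - Real.pi), g θ := by
      have h4 := intervalIntegral.integral_comp_add_right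
        (a := θ₀ - 2 * Real.pi) (b := θ₀ - Real.pi) g Real.pi
      rw [show θ₀ - 2 * Real.pi + Real.pi = θ₀ - Real.pi by ring,
        show θ₀ - Real.pi + Real.pi = θ₀ by ring] at h4
      rw [← h4]
      rw [show (fun x => g (x + Real.pi)) = fun x => -g x from funext hganti]  -- may need adjust
      rw [intervalIntegral.integral_neg]
    have h5 := intervalIntegral.integral_add_adjacent_intervals
      (a := θ₀ - 2 * Real.pi) (b := θ₀ - Real.pi) (c := θ₀) (hint _ _) (hint _ _)
    rw [intervalIntegral.integral_symm]
    rw [← h5, h2]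
    ring
  · -- bounds
    set M : ℝ := |p - 2| / (2 * (p - 1)) with hMdef
    have hM : 0 ≤ M := div_nonneg (abs_nonneg _) (by linarith)
    have hlow : ∀ θ, K * Real.exp (-M) ≤ wR p K θ := by
      intro θ
      apply mul_le_mul_of_nonneg_left _ hK.le
      apply Real.exp_le_exp.2
      rw [hMdef, neg_div', div_le_div_iff_of_pos_right (by linarith)]
      nlinarith [Real.cos_sq_le_one θ, sq_nonneg (Real.cos θ), le_abs_self (p - 2),
        neg_abs_le (p - 2)]
    have hhi : ∀ θ, wR p K θ ≤ K * Real.exp M := by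
      intro θ
      apply mul_le_mul_of_nonneg_left _ hK.le
      apply Real.exp_le_exp.2
      rw [hMdef, div_le_div_iff_of_pos_right (by linarith)]
      nlinarith [Real.cos_sq_le_one θ, sq_nonneg (Real.cos θ), le_abs_self (p - 2),
        neg_abs_le (p - 2)]
    refine ⟨(K * Real.exp (-M)) ^ 2 / 2, (K * Real.exp M) ^ 2 + 1, by positivity, ?_⟩
    intro s
    have hsq : w s ^ 2 + deriv w s ^ 2 = wR p K (χ s) ^ 2 := by
      rw [hderivw]
      simp only [hwdef, hwbdef]
      linear_combination (wR p K (χ s)) ^ 2 * hpy s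
    rw [hsq]
    have h1 := hlow (χ s)
    have h2 := hhi (χ s)
    have h3 : (0:ℝ) < K * Real.exp (-M) := by positivity
    constructor
    · nlinarith
    · nlinarith
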